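/- Let p be an odd prime, ℓ ≥ 0 an integer, j ≥ 0, and set c_ℓ = (p^ℓ − 1)/2. Then the number of m in {1, ..., j} whose p-adic valuation v_p(2m − 1) equals ℓ is given by the sum over t in {0, 1, ..., p−1} with t ≠ (p−1)/2 of ⌊(j + p^{ℓ+1} − 1 − c_ℓ − p^ℓ t) / p^{ℓ+1}⌋. -/

import Mathlib

/-- Counting lemma: number of `m ∈ [1,j]` with `m ≡ a (mod q)`, where `1 ≤ a ≤ q`. -/
lemma count_mod_Icc (q a j : ℕ) (hq : 0 < q) (ha1 : 1 ≤ a) (ha2 : a ≤ q) :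
    ((Finset.Icc 1 j).filter (fun m => m % q = a % q)).card = (j + q - a) / q := by
  have himg : (Finset.Icc 1 j).filter (fun m => m % q = a % q)
      = (Finset.range ((j + q - a) / q)).image (fun k => a + q * k) := by
    ext m
    simp only [Finset.mem_filter, Finset.mem_Icc, Finset.mem_image, Finset.mem_range]
    constructor
    · rintro ⟨⟨h1, h2⟩, h3⟩
      have hma : a ≤ m := by
        rcases eq_or_lt_of_le ha2 with h | h
        · subst h
          have h0 : m % a = 0 := by simpa using h3
          have := Nat.dvd_of_mod_eq_zero h0
          exact Nat.le_of_dvd (by omega) this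
        · rw [Nat.mod_eq_of_lt h] at h3
          by_contra hlt
          rw [Nat.mod_eq_of_lt (by omega)] at h3
          omega
      have hdvd : q ∣ m - a := (Nat.modEq_iff_dvd' hma).mp h3.symm
      obtain ⟨k, hk⟩ := hdvd
      have hm : m = a + q * k := by omega
      refine ⟨k, ?_, hm.symm⟩
      have hle : (k + 1) * q ≤ j + q - a := by
        have e : (k + 1) * q = q * k + q := by ring
        omega
      have := (Nat.le_div_iff_mul_le hq).mpr hle
      omega
    · rintro ⟨k, hk, rfl⟩
      have hle : (k + 1) * q ≤ j + q - a := (Nat.le_div_iff_mul_le hq).mp (by omega)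
      have e : (k + 1) * q = q * k + q := by ring
      refine ⟨⟨by omega, by omega⟩, ?_⟩
      simpa using Nat.add_mul_mod_self_left a q k
  rw [himg, Finset.card_image_of_injective _ (fun x y h => Nat.eq_of_mul_eq_mul_left hq (by omega)), Finset.card_range]

/-- Characterization of `v_p(2m-1) = ℓ` by a congruence condition on `m`. -/
lemma val_char (p ℓ m : ℕ) (hp : p.Prime) (hodd : Odd p) (hm : 1 ≤ m) :
    padicValNat p (2 * m - 1) = ℓ ↔
      ∃ t, t < p ∧ t ≠ (p - 1) / 2 ∧
        m % p ^ (ℓ + 1) = ((p ^ ℓ - 1) / 2 + 1 + p ^ ℓ * t) % p ^ (ℓ + 1) := by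
  have hp2 : 2 < p := lt_of_le_of_ne hp.two_le (by rintro rfl; exact absurd hodd (by decide))
  have hppos : 0 < p := by omega
  have hpl : 0 < p ^ ℓ := pow_pos hppos ℓ
  have hplodd : Odd (p ^ ℓ) := hodd.pow
  have hc : 2 * ((p ^ ℓ - 1) / 2) + 1 = p ^ ℓ := by
    obtain ⟨s, hs⟩ := hplodd; omega
  set c := (p ^ ℓ - 1) / 2 with hcdef
  set q := p ^ (ℓ + 1) with hqdef
  have hqmul : q = p ^ ℓ * p := by rw [hqdef, pow_succ]
  have hqpos : 0 < q := pow_pos hppos _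
  have hqodd : Odd q := hodd.pow
  have hcop : Nat.gcd q 2 = 1 := Nat.coprime_two_right.mpr hqodd
  set n := 2 * m - 1 with hndef
  have hn : n ≠ 0 := by omega
  have hn2 : n + 1 = 2 * m := by omega
  have hpodd : p % 2 = 1 := Nat.odd_iff.mp hodd
  have hfac : ∀ k : ℕ, p ^ k ∣ n ↔ k ≤ padicValNat p n := by
    intro k
    rw [← Nat.factorization_def n hp]
    exact Nat.Prime.pow_dvd_iff_le_factorization hp hn
  constructor
  · intro hv
    have hdvd : p ^ ℓ ∣ n := (hfac ℓ).mpr (by omega)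
    have hndvd : ¬ p ^ (ℓ + 1) ∣ n := fun h => by have := (hfac (ℓ + 1)).mp h; omega
    obtain ⟨u, hu⟩ := hdvd
    set r := u % p with hrdef
    have hr0 : r ≠ 0 := by
      intro h0
      exact hndvd (by rw [hu, pow_succ]; exact mul_dvd_mul_left _ (Nat.dvd_of_mod_eq_zero h0))
    have hrp : r < p := Nat.mod_lt _ hppos
    have hnmod : n % q = p ^ ℓ * r := by
      rw [hu, hqmul, Nat.mul_mod_mul_left]
    set t := if r % 2 = 1 then (r - 1) / 2 else (p + r - 1) / 2 with htdef
    have ht : (t < p ∧ t ≠ (p - 1) / 2) ∧ (2 * t + 1 = r ∨ 2 * t + 1 = p + r) := by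
      rcases Nat.lt_or_ge (r % 2) 1 with h | h
      · have : r % 2 = 0 := by omega
        rw [htdef, if_neg (by omega)]
        omega
      · have : r % 2 = 1 := by omega
        rw [htdef, if_pos this]
        omega
    refine ⟨t, ht.1.1, ht.1.2, ?_⟩
    have e1 : p ^ ℓ * (2 * t + 1) = 2 * (p ^ ℓ * t) + p ^ ℓ := by ring
    have h2a : (2 * (c + 1 + p ^ ℓ * t)) % q = (p ^ ℓ * r + 1) % q := by
      rcases ht.2 with h | h
      · congr 1
        have e2 : p ^ ℓ * r = p ^ ℓ * (2 * t + 1) := by rw [h]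
        omega
      · have e3 : 2 * (c + 1 + p ^ ℓ * t) = q + (p ^ ℓ * r + 1) := by
          have e4 : p ^ ℓ * (p + r) = p ^ ℓ * p + p ^ ℓ * r := by ring
          have e5 : p ^ ℓ * (2 * t + 1) = p ^ ℓ * (p + r) := by rw [h]
          omega
        rw [e3, Nat.add_mod_left]
    -- 2 * m ≡ 2 * (c + 1 + p^ℓ * t) [MOD q]
    have hmod : 2 * m ≡ 2 * (c + 1 + p ^ ℓ * t) [MOD q] := by
      have h1 : (2 * m) % q = (p ^ ℓ * r + 1) % q := by
        have : n % q + 1 = p ^ ℓ * r + 1 := by omega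
        calc (2 * m) % q = (n + 1) % q := by rw [hn2]
          _ = (n % q + 1) % q := by rw [Nat.mod_add_mod]
          _ = (p ^ ℓ * r + 1) % q := by rw [this]
      exact h1.trans h2a.symm
    exact Nat.ModEq.cancel_left_of_coprime hcop hmod
  · rintro ⟨t, htp, htne, hmq⟩
    have hmod : 2 * m ≡ 2 * (c + 1 + p ^ ℓ * t) [MOD q] := Nat.ModEq.mul_left 2 hmq
    set r := (2 * t + 1) % p with hrdef
    have hr0 : r ≠ 0 := by
      intro h0
      have hdv : p ∣ 2 * t + 1 := Nat.dvd_of_mod_eq_zero h0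
      have hle : p ≤ 2 * t + 1 := Nat.le_of_dvd (by omega) hdv
      have hdv2 : p ∣ 2 * t + 1 - p := Nat.dvd_sub hdv dvd_rfl
      have hz : 2 * t + 1 - p = 0 := Nat.eq_zero_of_dvd_of_lt hdv2 (by omega)
      omega
    have hrp : r < p := Nat.mod_lt _ hppos
    have hrlt : p ^ ℓ * r < q := by
      rw [hqmul]
      exact mul_lt_mul_of_pos_left hrp hpl
    have e2 : p ^ ℓ * (2 * t + 1) = 2 * (p ^ ℓ * t) + p ^ ℓ := by ring
    have h2a : (2 * (c + 1 + p ^ ℓ * t)) % q = (p ^ ℓ * (2 * t + 1) + 1) % q := by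
      congr 1
      omega
    have hn1 : (n + 1) % q = (p ^ ℓ * (2 * t + 1) + 1) % q := by
      rw [hn2]
      exact hmod.trans (Nat.ModEq.symm (by exact h2a.symm))
    have hnn : n ≡ p ^ ℓ * (2 * t + 1) [MOD q] := Nat.ModEq.add_right_cancel' 1 hn1
    have hnmod : n % q = p ^ ℓ * r := by
      have : (p ^ ℓ * (2 * t + 1)) % q = p ^ ℓ * r := by
        rw [hqmul, Nat.mul_mod_mul_left, ← hrdef]
      rw [Nat.ModEq] at hnn
      rw [hnn, this]
    have hdm := Nat.div_add_mod n q
    have hdvd : p ^ ℓ ∣ n := by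
      refine ⟨p * (n / q) + r, ?_⟩
      have e3 : p ^ ℓ * (p * (n / q) + r) = p ^ ℓ * p * (n / q) + p ^ ℓ * r := by ring
      rw [e3, ← hqmul]
      omega
    have hndvd : ¬ p ^ (ℓ + 1) ∣ n := by
      intro h
      have h0 : n % q = 0 := Nat.mod_eq_zero_of_dvd h
      have h1 : p ^ ℓ ≤ p ^ ℓ * r := Nat.le_mul_of_pos_right _ (by omega)
      omega
    have h1 := (hfac ℓ).mp hdvd
    have h2 : ¬ (ℓ + 1 ≤ padicValNat p n) := fun h => hndvd ((hfac (ℓ + 1)).mpr h)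
    omega

theorem stmt_4 (p ℓ j : ℕ) (hp : p.Prime) (hodd : Odd p) :
    ((Finset.Icc 1 j).filter
      (fun m => padicValNat p (2 * m - 1) = ℓ)).card
      = ∑ t ∈ (Finset.range p).filter (fun t => t ≠ (p - 1) / 2),
          (j + p ^ (ℓ + 1) - 1 - (p ^ ℓ - 1) / 2 - p ^ ℓ * t) / p ^ (ℓ + 1) := by
  have hp2 : 2 < p := lt_of_le_of_ne hp.two_le (by rintro rfl; exact absurd hodd (by decide))
  have hppos : 0 < p := by omega
  have hpl : 0 < p ^ ℓ := pow_pos hppos ℓ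
  have hplodd : Odd (p ^ ℓ) := hodd.pow
  have hc : 2 * ((p ^ ℓ - 1) / 2) + 1 = p ^ ℓ := by
    obtain ⟨s, hs⟩ := hplodd; omega
  set c := (p ^ ℓ - 1) / 2 with hcdef
  set q := p ^ (ℓ + 1) with hqdef
  have hqmul : q = p ^ ℓ * p := by rw [hqdef, pow_succ]
  have hqpos : 0 < q := pow_pos hppos _
  -- bounds on a t := c + 1 + p ^ ℓ * t for t < p
  have hbound : ∀ t < p, c + 1 + p ^ ℓ * t ≤ q := by
    intro t ht
    have h1 : p ^ ℓ * t + p ^ ℓ ≤ q := by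
      have : p ^ ℓ * (t + 1) ≤ p ^ ℓ * p := Nat.mul_le_mul_left _ (by omega)
      have e : p ^ ℓ * (t + 1) = p ^ ℓ * t + p ^ ℓ := by ring
      omega
    omega
  have hinj : ∀ x y : ℕ, 1 ≤ x → x ≤ q → 1 ≤ y → y ≤ q → x % q = y % q → x = y := by
    intro x y h1 h2 h3 h4 h
    have hx : x % q = if x = q then 0 else x := by
      split
      · simp [*]
      · exact Nat.mod_eq_of_lt (by omega)
    have hy : y % q = if y = q then 0 else y := by
      split
      · simp [*]
      · exact Nat.mod_eq_of_lt (by omega)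
    rw [hx, hy] at h
    split_ifs at h <;> omega
  have hsplit : (Finset.Icc 1 j).filter (fun m => padicValNat p (2 * m - 1) = ℓ)
      = ((Finset.range p).filter (fun t => t ≠ (p - 1) / 2)).biUnion
          (fun t => (Finset.Icc 1 j).filter (fun m => m % q = (c + 1 + p ^ ℓ * t) % q)) := by
    ext m
    simp only [Finset.mem_filter, Finset.mem_Icc, Finset.mem_biUnion, Finset.mem_range]
    constructor
    · rintro ⟨⟨h1, h2⟩, h3⟩
      obtain ⟨t, ht1, ht2, ht3⟩ := (val_char p ℓ m hp hodd h1).mp h3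
      exact ⟨t, ⟨ht1, ht2⟩, ⟨h1, h2⟩, ht3⟩
    · rintro ⟨t, ⟨ht1, ht2⟩, ⟨h1, h2⟩, h3⟩
      exact ⟨⟨h1, h2⟩, (val_char p ℓ m hp hodd h1).mpr ⟨t, ht1, ht2, h3⟩⟩
  rw [hsplit, Finset.card_biUnion]
  · refine Finset.sum_congr rfl ?_
    intro t ht
    simp only [Finset.mem_filter, Finset.mem_range] at ht
    rw [count_mod_Icc q (c + 1 + p ^ ℓ * t) j hqpos (by omega) (hbound t ht.1)]
    congr 1
    omega
  · intro t1 ht1 t2 ht2 hne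
    simp only [Finset.mem_coe, Finset.mem_filter, Finset.mem_range] at ht1 ht2
    rw [Function.onFun, Finset.disjoint_left]
    intro m hm1 hm2
    simp only [Finset.mem_filter, Finset.mem_Icc] at hm1 hm2
    apply hne
    have heq : (c + 1 + p ^ ℓ * t1) % q = (c + 1 + p ^ ℓ * t2) % q := by
      rw [← hm1.2, hm2.2]
    have := hinj _ _ (by omega) (hbound t1 ht1.1) (by omega) (hbound t2 ht2.1) heq
    have hmul : p ^ ℓ * t1 = p ^ ℓ * t2 := by omega
    exact Nat.eq_of_mul_eq_mul_left hpl hmul
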